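/- Let ε > 0 and for c ∈ ℝ define the Laplace density f_c(x) := (ε/4) · exp(−(ε/2)·|x − c|) with respect to Lebesgue measure on ℝ. Then the supremum over all measurable functions g : ℝ → Bool of (1/2)·∫_{ℝ} f_{−1}(x)·𝟙[g(x) = false] dx + (1/2)·∫_{ℝ} f_{1}(x)·𝟙[g(x) = true] dx equals 1 − (1/2)·exp(−ε/2), and it is attained by the sign test g(x) = true iff x > 0. (This is the optimal efficacy of one-run auditing without abstentions for the Local Laplace mechanism LLP_ε, which adds Laplace(2/ε) noise independently to each ±1 input.) -/

import Mathlib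

open MeasureTheory Real Set

-- integrability of Laplace density
lemma lap_integrable {a : ℝ} (ha : 0 < a) (c : ℝ) :
    Integrable (fun x : ℝ => Real.exp (-(a * |x - c|))) := by
  have h0 : Integrable (fun x : ℝ => Real.exp (-(a * |x|))) := by
    have h1 : IntegrableOn (fun x : ℝ => Real.exp (-(a * |x|))) (Ioi 0) := by
      refine (exp_neg_integrableOn_Ioi 0 ha).congr_fun (fun x hx => ?_) measurableSet_Ioi
      rw [abs_of_pos hx]; ring_nf
    have h1' : IntegrableOn (fun x : ℝ => Real.exp (-(a * |x|))) (Ici 0) :=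
      (integrableOn_Ici_iff_integrableOn_Ioi (f := fun x : ℝ => Real.exp (-(a * |x|))) (b := 0)).2 h1
    have h2 : IntegrableOn (fun x : ℝ => Real.exp (-(a * |x|))) (Iic 0) := by
      have H := ((integrable_indicator_iff measurableSet_Ici).2 h1').comp_neg
      rw [← integrable_indicator_iff measurableSet_Iic]
      refine H.congr (Filter.Eventually.of_forall fun x => ?_)
      by_cases hx : x ≤ 0
      · simp [Set.indicator, hx, neg_nonneg, abs_neg]
      · simp [Set.indicator, hx, neg_nonneg]
    rw [← integrableOn_univ, ← Iic_union_Ioi (a := (0:ℝ))]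
    exact h2.union h1
  simpa using h0.comp_sub_right c


lemma lap_int_Ioi {a : ℝ} (ha : 0 < a) :
    ∫ x in Ioi (0:ℝ), Real.exp (-(a * |x - 1|)) = (2 - Real.exp (-a)) / a := by
  have hd : Disjoint (Ioc (0:ℝ) 1) (Ioi 1) := Ioc_disjoint_Ioi le_rfl
  have hint := (lap_integrable ha 1).integrableOn (s := Ioc (0:ℝ) 1)
  have hint2 := (lap_integrable ha 1).integrableOn (s := Ioi (1:ℝ))
  rw [← Ioc_union_Ioi_eq_Ioi (zero_le_one : (0:ℝ) ≤ 1),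
    setIntegral_union hd measurableSet_Ioi hint hint2]
  have e1 : ∫ x in Ioc (0:ℝ) 1, Real.exp (-(a * |x - 1|)) = (1 - Real.exp (-a)) / a := by
    rw [← intervalIntegral.integral_of_le (zero_le_one : (0:ℝ) ≤ 1)]
    have : ∀ x : ℝ, x ∈ Set.uIcc (0:ℝ) 1 → Real.exp (-(a * |x - 1|)) =
        Real.exp (-a) * Real.exp (a * x) := by
      intro x hx
      rw [Set.uIcc_of_le zero_le_one] at hx
      rw [abs_of_nonpos (by linarith [hx.2] : x - 1 ≤ 0), ← Real.exp_add]
      ring_nf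
    rw [intervalIntegral.integral_congr this, intervalIntegral.integral_const_mul]
    have : ∫ x in (0:ℝ)..1, Real.exp (a * x) = a⁻¹ * (Real.exp a - 1) := by
      rw [intervalIntegral.integral_comp_mul_left (fun x => Real.exp x) (ne_of_gt ha)]
      simp [integral_exp]
    rw [this]
    field_simp
    ring_nf
    rw [Real.exp_neg]
    field_simp
    ring
  have e2 : ∫ x in Ioi (1:ℝ), Real.exp (-(a * |x - 1|)) = a⁻¹ := by
    have : ∀ x ∈ Ioi (1:ℝ), Real.exp (-(a * |x - 1|)) =
        Real.exp a * Real.exp (-(a * x)) := by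
      intro x hx
      rw [abs_of_nonneg (by linarith [mem_Ioi.1 hx] : (0:ℝ) ≤ x - 1), ← Real.exp_add]
      ring_nf
    rw [setIntegral_congr_fun measurableSet_Ioi this, integral_const_mul]
    have : ∫ x in Ioi (1:ℝ), Real.exp (-(a * x)) = a⁻¹ * Real.exp (-a) := by
      have := integral_comp_mul_left_Ioi (fun x => Real.exp (-x)) 1 ha
      simp only [smul_eq_mul, mul_one] at this
      rw [show (fun x => Real.exp (-(a * x))) = fun x => Real.exp (-(a * x)) from rfl]
      calc ∫ x in Ioi (1:ℝ), Real.exp (-(a * x)) = a⁻¹ * ∫ x in Ioi a, Real.exp (-x) := this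
        _ = a⁻¹ * Real.exp (-a) := by rw [integral_exp_neg_Ioi]
    rw [this, ← mul_assoc, mul_comm (Real.exp a) a⁻¹, mul_assoc, ← Real.exp_add]
    simp
  rw [e1, e2]; ring

noncomputable def laplaceSuccess (ε : ℝ) (g : ℝ → Bool) : ℝ :=
  (1 / 2) * (∫ x : ℝ, (ε / 4) * Real.exp (-(ε / 2) * |x - (-1)|) *
      (if g x = false then (1 : ℝ) else 0)) +
  (1 / 2) * (∫ x : ℝ, (ε / 4) * Real.exp (-(ε / 2) * |x - 1|) *
      (if g x = true then (1 : ℝ) else 0))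

lemma lap_weight_integrable {ε : ℝ} (hε : 0 < ε) (c : ℝ) {w : ℝ → ℝ}
    (hw : Measurable w) (hb : ∀ x, ‖w x‖ ≤ 1) :
    Integrable (fun x : ℝ => (ε / 4) * Real.exp (-(ε / 2) * |x - c|) * w x) := by
  have base : Integrable (fun x : ℝ => (ε / 4) * Real.exp (-(ε / 2 * |x - c|))) :=
    (lap_integrable (half_pos hε) c).const_mul _
  have := base.bdd_mul (c := 1) hw.aestronglyMeasurable (Filter.Eventually.of_forall hb)
  refine this.congr (Filter.Eventually.of_forall fun x => ?_)
  simp only [neg_mul]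
  ring

lemma sign_success {ε : ℝ} (hε : 0 < ε) :
    laplaceSuccess ε (fun x => decide (0 < x)) = 1 - (1 / 2) * Real.exp (-ε / 2) := by
  have ha : (0:ℝ) < ε / 2 := half_pos hε
  have hIoi : ∫ x in Ioi (0:ℝ), Real.exp (-(ε / 2 * |x - 1|)) =
      (2 - Real.exp (-(ε / 2))) / (ε / 2) := lap_int_Ioi ha
  have hIic : ∫ x in Iic (0:ℝ), Real.exp (-(ε / 2 * |x - (-1)|)) =
      (2 - Real.exp (-(ε / 2))) / (ε / 2) := by
    have h := integral_comp_neg_Iic (0:ℝ) (fun x => Real.exp (-(ε / 2 * |x - 1|)))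
    rw [neg_zero] at h
    rw [← hIoi, ← h]
    refine setIntegral_congr_fun measurableSet_Iic fun x _ => ?_
    have hx : |x - (-1)| = |(-x) - 1| := by rw [← abs_neg (x - (-1))]; ring_nf
    simp only [hx]
  have e1 : (∫ x : ℝ, (ε / 4) * Real.exp (-(ε / 2) * |x - (-1)|) *
      (if (decide (0 < x)) = false then (1 : ℝ) else 0)) =
      (ε / 4) * ((2 - Real.exp (-(ε / 2))) / (ε / 2)) := by
    have heq : ∀ x : ℝ, (ε / 4) * Real.exp (-(ε / 2) * |x - (-1)|) *
        (if (decide (0 < x)) = false then (1 : ℝ) else 0) =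
        Set.indicator (Iic (0:ℝ))
          (fun x => (ε / 4) * Real.exp (-(ε / 2) * |x - (-1)|)) x := by
      intro x
      by_cases hx : x ≤ 0
      · simp [Set.indicator, hx, not_lt.2 hx]
      · simp [Set.indicator, hx, not_le.1 hx]
    rw [integral_congr_ae (Filter.Eventually.of_forall heq),
      integral_indicator measurableSet_Iic, integral_const_mul, ← hIic]
    congr 1
    refine setIntegral_congr_fun measurableSet_Iic fun x _ => ?_
    rw [neg_mul]
  have e2 : (∫ x : ℝ, (ε / 4) * Real.exp (-(ε / 2) * |x - 1|) *
      (if (decide (0 < x)) = true then (1 : ℝ) else 0)) =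
      (ε / 4) * ((2 - Real.exp (-(ε / 2))) / (ε / 2)) := by
    have heq : ∀ x : ℝ, (ε / 4) * Real.exp (-(ε / 2) * |x - 1|) *
        (if (decide (0 < x)) = true then (1 : ℝ) else 0) =
        Set.indicator (Ioi (0:ℝ))
          (fun x => (ε / 4) * Real.exp (-(ε / 2) * |x - 1|)) x := by
      intro x
      by_cases hx : 0 < x
      · simp [Set.indicator, hx]
      · simp [Set.indicator, hx]
    rw [integral_congr_ae (Filter.Eventually.of_forall heq),
      integral_indicator measurableSet_Ioi, integral_const_mul, ← hIoi]
    congr 1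
    refine setIntegral_congr_fun measurableSet_Ioi fun x _ => ?_
    rw [neg_mul]
  unfold laplaceSuccess
  rw [e1, e2]
  have hne : (ε : ℝ) ≠ 0 := ne_of_gt hε
  rw [show (-ε) / 2 = -(ε / 2) by ring]
  field_simp
  ring

lemma key_pt {ε : ℝ} (hε : 0 < ε) (g : ℝ → Bool) (x : ℝ) :
    (ε / 4) * Real.exp (-(ε / 2) * |x - (-1)|) * (if g x = false then (1:ℝ) else 0) +
      (ε / 4) * Real.exp (-(ε / 2) * |x - 1|) * (if g x = true then (1:ℝ) else 0) ≤
    (ε / 4) * Real.exp (-(ε / 2) * |x - (-1)|) *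
        (if (decide (0 < x)) = false then (1:ℝ) else 0) +
      (ε / 4) * Real.exp (-(ε / 2) * |x - 1|) *
        (if (decide (0 < x)) = true then (1:ℝ) else 0) := by
  have hεpos : (0:ℝ) ≤ ε / 2 := by positivity
  by_cases hx : 0 < x
  · have hd : decide (0 < x) = true := decide_eq_true hx
    have habs : |x - 1| ≤ |x + 1| := by
      rw [abs_of_pos (show (0:ℝ) < x + 1 by linarith)]
      exact abs_le.2 ⟨by linarith, by linarith⟩
    have h3 : Real.exp (-(ε / 2 * |x + 1|)) ≤ Real.exp (-(ε / 2 * |x - 1|)) := by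
      apply Real.exp_le_exp.2
      nlinarith [mul_le_mul_of_nonneg_left habs hεpos]
    have hle : ε / 4 * Real.exp (-(ε / 2 * |x + 1|)) ≤
        ε / 4 * Real.exp (-(ε / 2 * |x - 1|)) :=
      mul_le_mul_of_nonneg_left h3 (by positivity)
    cases hgx : g x <;> simp [hgx, hd] <;> linarith [hle]
  · have hd : decide (0 < x) = false := by simp [hx]
    have hx' : x ≤ 0 := not_lt.1 hx
    have habs : |x + 1| ≤ |x - 1| := by
      rw [abs_of_nonpos (show x - 1 ≤ 0 by linarith)]
      exact abs_le.2 ⟨by linarith, by linarith⟩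
    have h3 : Real.exp (-(ε / 2 * |x - 1|)) ≤ Real.exp (-(ε / 2 * |x + 1|)) := by
      apply Real.exp_le_exp.2
      nlinarith [mul_le_mul_of_nonneg_left habs hεpos]
    have hle : ε / 4 * Real.exp (-(ε / 2 * |x - 1|)) ≤
        ε / 4 * Real.exp (-(ε / 2 * |x + 1|)) :=
      mul_le_mul_of_nonneg_left h3 (by positivity)
    cases hgx : g x <;> simp [hgx, hd] <;> linarith [hle]

lemma success_le {ε : ℝ} (hε : 0 < ε) {g : ℝ → Bool} (hg : Measurable g) :
    laplaceSuccess ε g ≤ laplaceSuccess ε (fun x => decide (0 < x)) := by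
  classical
  have hw1 : Measurable (fun x => if g x = false then (1:ℝ) else 0) :=
    Measurable.ite (hg (measurableSet_singleton false)) measurable_const measurable_const
  have hw2 : Measurable (fun x => if g x = true then (1:ℝ) else 0) :=
    Measurable.ite (hg (measurableSet_singleton true)) measurable_const measurable_const
  have hsetf : {x : ℝ | decide (0 < x) = false} = Iic 0 := by ext x; simp [not_lt]
  have hsett : {x : ℝ | decide (0 < x) = true} = Ioi 0 := by ext x; simp
  have hw3 : Measurable (fun x : ℝ => if (decide (0 < x)) = false then (1:ℝ) else 0) := by
    refine Measurable.ite ?_ measurable_const measurable_const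
    rw [show {a : ℝ | decide (0 < a) = false} = Iic 0 from hsetf]
    exact measurableSet_Iic
  have hw4 : Measurable (fun x : ℝ => if (decide (0 < x)) = true then (1:ℝ) else 0) := by
    refine Measurable.ite ?_ measurable_const measurable_const
    rw [show {a : ℝ | decide (0 < a) = true} = Ioi 0 from hsett]
    exact measurableSet_Ioi
  have I1 := lap_weight_integrable hε (-1) hw1 (fun x => by split <;> simp)
  have I2 := lap_weight_integrable hε 1 hw2 (fun x => by split <;> simp)
  have I3 := lap_weight_integrable hε (-1) hw3 (fun x => by split <;> simp)
  have I4 := lap_weight_integrable hε 1 hw4 (fun x => by split <;> simp)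
  have comb : laplaceSuccess ε g =
      (1/2) * ∫ x : ℝ,
        ((ε / 4) * Real.exp (-(ε / 2) * |x - (-1)|) * (if g x = false then (1:ℝ) else 0) +
         (ε / 4) * Real.exp (-(ε / 2) * |x - 1|) * (if g x = true then (1:ℝ) else 0)) := by
    unfold laplaceSuccess
    rw [integral_add I1 I2]
    ring
  have comb2 : laplaceSuccess ε (fun x => decide (0 < x)) =
      (1/2) * ∫ x : ℝ,
        ((ε / 4) * Real.exp (-(ε / 2) * |x - (-1)|) *
            (if (decide (0 < x)) = false then (1:ℝ) else 0) +
         (ε / 4) * Real.exp (-(ε / 2) * |x - 1|) *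
            (if (decide (0 < x)) = true then (1:ℝ) else 0)) := by
    unfold laplaceSuccess
    rw [integral_add I3 I4]
    ring
  rw [comb, comb2]
  have hmono := integral_mono (I1.add I2) (I3.add I4) (key_pt hε g)
  simp only [Pi.add_apply] at hmono
  linarith

theorem stmt12 (ε : ℝ) (hε : 0 < ε) :
    sSup {r : ℝ | ∃ g : ℝ → Bool, Measurable g ∧ r = laplaceSuccess ε g} =
      1 - (1 / 2) * Real.exp (-ε / 2) ∧
    laplaceSuccess ε (fun x => decide (0 < x)) = 1 - (1 / 2) * Real.exp (-ε / 2) := by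
  have hsign : Measurable (fun x : ℝ => decide (0 < x)) := by
    refine measurable_to_countable' fun b => ?_
    cases b
    · have h : (fun x : ℝ => decide (0 < x)) ⁻¹' {false} = Iic 0 := by
        ext x; simp [not_lt]
      rw [h]; exact measurableSet_Iic
    · have h : (fun x : ℝ => decide (0 < x)) ⁻¹' {true} = Ioi 0 := by
        ext x; simp
      rw [h]; exact measurableSet_Ioi
  have h2 := sign_success hε
  refine ⟨?_, h2⟩
  have hgt : IsGreatest {r : ℝ | ∃ g : ℝ → Bool, Measurable g ∧ r = laplaceSuccess ε g}
      (1 - (1 / 2) * Real.exp (-ε / 2)) := by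
    constructor
    · exact ⟨fun x => decide (0 < x), hsign, h2.symm⟩
    · rintro r ⟨g, hg, rfl⟩
      rw [← h2]
      exact success_le hε hg
  exact hgt.csSup_eq
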